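/- Let E be a finite-dimensional real inner product space, μ : E → E differentiable with ‖Dμ(w)‖_op ≤ K for all w, ℰ : E → ℝ convex and differentiable with ‖∇ℰ(x) − ∇ℰ(y)‖² ≤ 2L_ℰ · D_ℰ(x, y) for all x, y, and F := ℰ ∘ μ. Assume the bounded deviation ratio condition: for all w, w′, ‖Dμ(w) − Dμ(w′)‖_op · max{‖∇ℰ(μ(w))‖, ‖∇ℰ(μ(w′))‖} ≤ σ · max{‖Dμ(w)‖_op, ‖Dμ(w′)‖_op} · ‖∇ℰ(μ(w)) − ∇ℰ(μ(w′))‖. Fix w* ∈ E and suppose D_ℰ(μ(w), μ(w*)) ≤ τ · D_F(w, w*) for all w. Then for all w ∈ E: ‖∇F(w) − ∇F(w*)‖² ≤ 2 L_F · D_F(w, w*), where L_F := τ (1 + σ)² K² L_ℰ. -/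

import Mathlib

open RealInnerProductSpace

/-- Bregman divergence of a differentiable function `g`. -/
noncomputable def bregman {E : Type*} [NormedAddCommGroup E] [InnerProductSpace ℝ E]
    [CompleteSpace E] (g : E → ℝ) (x y : E) : ℝ :=
  g x - g y - ⟪gradient g y, x - y⟫

lemma inner_gradient' {E : Type*} [NormedAddCommGroup E] [InnerProductSpace ℝ E]
    [CompleteSpace E] (f : E → ℝ) (x v : E) :
    ⟪gradient f x, v⟫ = fderiv ℝ f x v := by
  simp only [gradient, InnerProductSpace.toDual_symm_apply]

lemma bregman_nonneg' {E : Type*} [NormedAddCommGroup E] [InnerProductSpace ℝ E]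
    [CompleteSpace E] {f : E → ℝ} (hconv : ConvexOn ℝ Set.univ f)
    (hf : Differentiable ℝ f) (x y : E) : 0 ≤ bregman f x y := by
  have hline : ∀ t : ℝ, HasDerivAt (f ∘ (AffineMap.lineMap y x : ℝ →ᵃ[ℝ] E))
      (fderiv ℝ f (AffineMap.lineMap y x t) (x - y)) t := by
    intro t
    have h1 : HasDerivAt (fun t : ℝ => (AffineMap.lineMap y x : ℝ →ᵃ[ℝ] E) t) (x - y) t := by
      have : (fun t : ℝ => (AffineMap.lineMap y x : ℝ →ᵃ[ℝ] E) t)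
          = fun t : ℝ => t • (x - y) + y := by
        funext t
        simp [AffineMap.lineMap_apply_module]
        module
      rw [this]
      simpa using ((hasDerivAt_id t).smul_const (x - y)).add_const y
    exact ((hf _).hasFDerivAt).comp_hasDerivAt t h1
  have hφconv : ConvexOn ℝ Set.univ (f ∘ (AffineMap.lineMap y x : ℝ →ᵃ[ℝ] E)) := by
    have := hconv.comp_affineMap (AffineMap.lineMap y x : ℝ →ᵃ[ℝ] E)
    simpa using this
  have hs := hφconv.le_slope_of_hasDerivAt (Set.mem_univ (0:ℝ)) (Set.mem_univ (1:ℝ))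
    one_pos (hline 0)
  simp only [slope_def_field, Function.comp_apply, AffineMap.lineMap_apply_zero,
    AffineMap.lineMap_apply_one] at hs
  have : fderiv ℝ f y (x - y) ≤ f x - f y := by
    simpa using hs
  rw [bregman, inner_gradient']
  linarith

set_option maxHeartbeats 1000000 in
theorem expected_smooth_personalized_local_objective
    {E : Type*} [NormedAddCommGroup E] [InnerProductSpace ℝ E] [FiniteDimensional ℝ E]
    (μ : E → E) (hμ : Differentiable ℝ μ)
    (ℰ : E → ℝ) (hℰconv : ConvexOn ℝ Set.univ ℰ) (hℰ : Differentiable ℝ ℰ)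
    (K σ Lℰ τ : ℝ)
    (hK : ∀ w : E, ‖fderiv ℝ μ w‖ ≤ K)
    (hsmooth : ∀ x y : E,
      ‖gradient ℰ x - gradient ℰ y‖ ^ 2 ≤ 2 * Lℰ * bregman ℰ x y)
    (hdev : ∀ w w' : E,
      ‖fderiv ℝ μ w - fderiv ℝ μ w'‖
          * max ‖gradient ℰ (μ w)‖ ‖gradient ℰ (μ w')‖
        ≤ σ * max ‖fderiv ℝ μ w‖ ‖fderiv ℝ μ w'‖
          * ‖gradient ℰ (μ w) - gradient ℰ (μ w')‖)
    (wstar : E)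
    (hτ : ∀ w : E, bregman ℰ (μ w) (μ wstar) ≤ τ * bregman (ℰ ∘ μ) w wstar) :
    ∀ w : E,
      ‖gradient (ℰ ∘ μ) w - gradient (ℰ ∘ μ) wstar‖ ^ 2
        ≤ 2 * (τ * (1 + σ) ^ 2 * K ^ 2 * Lℰ) * bregman (ℰ ∘ μ) w wstar := by
  -- chain rule identity for the gradient of the composition
  have chain : ∀ u v : E, ⟪gradient (ℰ ∘ μ) u, v⟫ = ⟪gradient ℰ (μ u), fderiv ℝ μ u v⟫ := by
    intro u v
    rw [inner_gradient', inner_gradient',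
      show fderiv ℝ (ℰ ∘ μ) u = (fderiv ℝ ℰ (μ u)).comp (fderiv ℝ μ u) from
        fderiv_comp u (hℰ _) (hμ u)]
    rfl
  intro w
  set A : E →L[ℝ] E := fderiv ℝ μ w with hA
  set B : E →L[ℝ] E := fderiv ℝ μ wstar with hB
  set g : E := gradient ℰ (μ w) with hg
  set h : E := gradient ℰ (μ wstar) with hh
  set ΔF : E := gradient (ℰ ∘ μ) w - gradient (ℰ ∘ μ) wstar with hΔFdef
  have hKnn : 0 ≤ K := le_trans (norm_nonneg _) (hK w)
  have hbreg : 0 ≤ bregman ℰ (μ w) (μ wstar) := bregman_nonneg' hℰconv hℰ _ _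
  have hτw := hτ w
  -- key inner-product bound
  have hKey : ‖ΔF‖ ^ 2 ≤ (‖A‖ * ‖g - h‖ + ‖A - B‖ * ‖h‖) * ‖ΔF‖ := by
    have e1 : ‖ΔF‖ ^ 2 = ⟪g - h, A ΔF⟫ + ⟪h, (A - B) ΔF⟫ := by
      rw [← real_inner_self_eq_norm_sq]
      rw [hΔFdef, inner_sub_left (𝕜 := ℝ), chain w ΔF, chain wstar ΔF]
      rw [inner_sub_left (𝕜 := ℝ), ContinuousLinearMap.sub_apply,
        inner_sub_right (𝕜 := ℝ)]
      ring
    rw [e1]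
    have b1 : ⟪g - h, A ΔF⟫ ≤ ‖g - h‖ * (‖A‖ * ‖ΔF‖) :=
      le_trans (real_inner_le_norm _ _)
        (mul_le_mul_of_nonneg_left (A.le_opNorm ΔF) (norm_nonneg _))
    have b2 : ⟪h, (A - B) ΔF⟫ ≤ ‖h‖ * (‖A - B‖ * ‖ΔF‖) :=
      le_trans (real_inner_le_norm _ _)
        (mul_le_mul_of_nonneg_left ((A - B).le_opNorm ΔF) (norm_nonneg _))
    nlinarith [b1, b2]
  have hΔF : ‖ΔF‖ ≤ ‖A‖ * ‖g - h‖ + ‖A - B‖ * ‖h‖ := by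
    rcases (norm_nonneg ΔF).eq_or_lt with hz | hz
    · rw [← hz]
      positivity
    · have : ‖ΔF‖ * ‖ΔF‖ ≤ (‖A‖ * ‖g - h‖ + ‖A - B‖ * ‖h‖) * ‖ΔF‖ := by
        nlinarith [hKey]
      exact le_of_mul_le_mul_right this hz
  rcases lt_or_ge Lℰ 0 with hL | hL
  · -- degenerate case `Lℰ < 0`: the gradient of `ℰ` is globally constant
    have hgradeq : ∀ x y : E, gradient ℰ x = gradient ℰ y ∧ bregman ℰ x y = 0 := by
      intro x y
      have h1 := hsmooth x y
      have h2 := bregman_nonneg' hℰconv hℰ x y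
      have hb : bregman ℰ x y = 0 := by nlinarith [sq_nonneg ‖gradient ℰ x - gradient ℰ y‖]
      have hgz : ‖gradient ℰ x - gradient ℰ y‖ = 0 := by
        nlinarith [norm_nonneg (gradient ℰ x - gradient ℰ y)]
      exact ⟨sub_eq_zero.mp (norm_eq_zero.mp hgz), hb⟩
    by_cases hc : h = 0
    · -- gradient of ℰ is identically zero
      have hg0 : ∀ x : E, gradient ℰ x = 0 := fun x => ((hgradeq x (μ wstar)).1).trans hc
      have hF0 : ∀ u : E, gradient (ℰ ∘ μ) u = 0 := by
        intro u
        have : ⟪gradient (ℰ ∘ μ) u, gradient (ℰ ∘ μ) u⟫ = 0 := by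
          rw [chain u, hg0]
          exact inner_zero_left _
        exact inner_self_eq_zero.mp this
      have hbE := (hgradeq (μ w) (μ wstar)).2
      rw [bregman] at hbE
      have hDF : bregman (ℰ ∘ μ) w wstar = 0 := by
        rw [bregman, hF0, inner_zero_left]
        rw [hg0, inner_zero_left] at hbE
        simpa using hbE
      rw [hΔFdef, hF0, hF0, hDF]
      simp
    · -- nonzero constant gradient forces `fderiv μ` to be constant
      have hgrad : ∀ x : E, gradient ℰ x = h := fun x => (hgradeq x (μ wstar)).1
      have hAeq : ∀ u u' : E, fderiv ℝ μ u = fderiv ℝ μ u' := by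
        intro u u'
        have hd := hdev u u'
        rw [hgrad (μ u), hgrad (μ u')] at hd
        simp only [sub_self, norm_zero, mul_zero, max_self] at hd
        have hcpos : 0 < ‖h‖ := norm_pos_iff.mpr hc
        have : ‖fderiv ℝ μ u - fderiv ℝ μ u'‖ ≤ 0 := by
          by_contra hcon
          push_neg at hcon
          nlinarith
        have hz : ‖fderiv ℝ μ u - fderiv ℝ μ u'‖ = 0 := le_antisymm this (norm_nonneg _)
        exact sub_eq_zero.mp (norm_eq_zero.mp hz)
      have hABe : A = B := hAeq w wstar
      have haffine : μ w - μ wstar = B (w - wstar) := by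
        have hdiff : Differentiable ℝ (fun u => μ u - B u) :=
          hμ.sub B.differentiable
        have hder : ∀ u : E, fderiv ℝ (fun u => μ u - B u) u = 0 := by
          intro u
          rw [fderiv_fun_sub (hμ u) (B.differentiableAt)]
          rw [B.fderiv]
          rw [show fderiv ℝ μ u = B from hAeq u wstar]
          simp
        have := is_const_of_fderiv_eq_zero hdiff hder w wstar
        have h2 : μ w - B w = μ wstar - B wstar := this
        have := B.map_sub w wstar
        rw [this]
        abel_nf
        abel_nf at h2
        linear_combination (norm := abel) h2
      have hbE := (hgradeq (μ w) (μ wstar)).2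
      rw [bregman] at hbE
      have hDF : bregman (ℰ ∘ μ) w wstar = 0 := by
        rw [bregman]
        have h1 : ⟪gradient (ℰ ∘ μ) wstar, w - wstar⟫ = ⟪h, B (w - wstar)⟫ :=
          chain wstar (w - wstar)
        rw [Function.comp_apply, Function.comp_apply, h1, ← haffine]
        rw [← hh] at hbE
        linarith [hbE]
      have hΔF0 : ΔF = 0 := by
        have : ⟪ΔF, ΔF⟫ = 0 := by
          rw [hΔFdef, inner_sub_left (𝕜 := ℝ), chain w, chain wstar, ← hA, ← hB, hABe,
            hgrad (μ w), hgrad (μ wstar)]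
          ring
        exact inner_self_eq_zero.mp this
      rw [hΔF0, hDF]
      simp
  · -- main case `0 ≤ Lℰ`
    rcases le_or_gt 0 σ with hσ | hσ
    · -- σ ≥ 0
      have hterm2 : ‖A - B‖ * ‖h‖ ≤ σ * K * ‖g - h‖ := by
        have s1 : ‖A - B‖ * ‖h‖ ≤ ‖A - B‖ * max ‖g‖ ‖h‖ :=
          mul_le_mul_of_nonneg_left (le_max_right _ _) (norm_nonneg _)
        have s2 := hdev w wstar
        have s3 : max ‖A‖ ‖B‖ ≤ K := max_le (hK w) (hK wstar)
        have s4 : σ * max ‖A‖ ‖B‖ * ‖g - h‖ ≤ σ * K * ‖g - h‖ := by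
          have : 0 ≤ σ * ‖g - h‖ := mul_nonneg hσ (norm_nonneg _)
          nlinarith
        calc ‖A - B‖ * ‖h‖ ≤ ‖A - B‖ * max ‖g‖ ‖h‖ := s1
          _ ≤ σ * max ‖A‖ ‖B‖ * ‖g - h‖ := s2
          _ ≤ σ * K * ‖g - h‖ := s4
      have h1 : ‖ΔF‖ ≤ (1 + σ) * K * ‖g - h‖ := by
        have : ‖A‖ * ‖g - h‖ ≤ K * ‖g - h‖ :=
          mul_le_mul_of_nonneg_right (hK w) (norm_nonneg _)
        nlinarith [hΔF]
      have h2 : ‖ΔF‖ ^ 2 ≤ ((1 + σ) * K * ‖g - h‖) ^ 2 :=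
        pow_le_pow_left₀ (norm_nonneg _) h1 2
      calc ‖ΔF‖ ^ 2 ≤ ((1 + σ) * K * ‖g - h‖) ^ 2 := h2
        _ = (1 + σ) ^ 2 * K ^ 2 * ‖g - h‖ ^ 2 := by ring
        _ ≤ (1 + σ) ^ 2 * K ^ 2 * (2 * Lℰ * bregman ℰ (μ w) (μ wstar)) := by
            apply mul_le_mul_of_nonneg_left (hsmooth (μ w) (μ wstar)) (by positivity)
        _ ≤ (1 + σ) ^ 2 * K ^ 2 * (2 * Lℰ * (τ * bregman (ℰ ∘ μ) w wstar)) := by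
            have h2L : (0:ℝ) ≤ 2 * Lℰ := by linarith
            exact mul_le_mul_of_nonneg_left (mul_le_mul_of_nonneg_left hτw h2L)
              (by positivity)
        _ = 2 * (τ * (1 + σ) ^ 2 * K ^ 2 * Lℰ) * bregman (ℰ ∘ μ) w wstar := by ring
    · -- σ < 0: the deviation condition collapses, and `∇F` is constant on the pair
      have hmg : (0:ℝ) ≤ max ‖g‖ ‖h‖ := le_trans (norm_nonneg g) (le_max_left _ _)
      have hmA : (0:ℝ) ≤ max ‖A‖ ‖B‖ := le_trans (norm_nonneg A) (le_max_left _ _)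
      have hd := hdev w wstar
      have hlhsnn : 0 ≤ ‖A - B‖ * max ‖g‖ ‖h‖ := mul_nonneg (norm_nonneg _) hmg
      have hX : max ‖A‖ ‖B‖ * ‖g - h‖ = 0 := by
        have h0 : 0 ≤ σ * max ‖A‖ ‖B‖ * ‖g - h‖ := le_trans hlhsnn hd
        nlinarith [mul_nonneg hmA (norm_nonneg (g - h))]
      have ht1 : ‖A‖ * ‖g - h‖ = 0 := by
        have : ‖A‖ * ‖g - h‖ ≤ max ‖A‖ ‖B‖ * ‖g - h‖ :=
          mul_le_mul_of_nonneg_right (le_max_left _ _) (norm_nonneg _)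
        have hnn : 0 ≤ ‖A‖ * ‖g - h‖ := mul_nonneg (norm_nonneg _) (norm_nonneg _)
        linarith [hX ▸ this]
      have ht2 : ‖A - B‖ * ‖h‖ = 0 := by
        have s1 : ‖A - B‖ * ‖h‖ ≤ ‖A - B‖ * max ‖g‖ ‖h‖ :=
          mul_le_mul_of_nonneg_left (le_max_right _ _) (norm_nonneg _)
        have s2 : σ * max ‖A‖ ‖B‖ * ‖g - h‖ = 0 := by
          rw [mul_assoc, hX, mul_zero]
        have hnn : 0 ≤ ‖A - B‖ * ‖h‖ := mul_nonneg (norm_nonneg _) (norm_nonneg _)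
        linarith [le_trans s1 hd, s2 ▸ (le_trans s1 hd)]
      have hΔF0 : ‖ΔF‖ = 0 :=
        le_antisymm (by linarith [hΔF, ht1, ht2]) (norm_nonneg _)
      rw [hΔF0]
      have hLτ : 0 ≤ Lℰ * (τ * bregman (ℰ ∘ μ) w wstar) := by nlinarith
      nlinarith [sq_nonneg (1 + σ), sq_nonneg K, mul_nonneg (mul_nonneg (sq_nonneg (1 + σ)) (sq_nonneg K)) hLτ]
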